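/- Let λ := (1/π)·sin((3π−2)/12), let τ₁ be the unique number in (0, √3/2) with (π/2)·∫₀^{τ₁} dτ/(2−√(1+4τ²)) = 1/3, and define recursively τ_{j+1} := τ_j + λ·(2 − √(1+4τ_j²)) for j = 1, 2, 3, 4. Then τ₂ > 0.3757396, τ₃ > 0.5140409, τ₄ > 0.6184976, and τ₅ > 0.6940725. -/

import Mathlib

set_option maxHeartbeats 1000000

open MeasureTheory

private lemma nonneg_of_deriv {f d : ℝ → ℝ} (h0 : f 0 = 0)
    (hf : ∀ x : ℝ, HasDerivAt f (d x) x) (hd : ∀ x : ℝ, 0 ≤ x → 0 ≤ d x)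
    {x : ℝ} (hx : 0 ≤ x) : 0 ≤ f x := by
  have hmono : MonotoneOn f (Set.Icc 0 x) :=
    monotoneOn_of_deriv_nonneg (convex_Icc 0 x)
      (fun y _ => (hf y).continuousAt.continuousWithinAt)
      (fun y _ => (hf y).differentiableAt.differentiableWithinAt)
      (fun y hy => by
        rw [(hf y).deriv]
        exact hd y (le_of_lt (by simpa using (Set.mem_Ioo.mp (by simpa using hy)).1)))
  have := hmono (Set.left_mem_Icc.mpr hx) (Set.right_mem_Icc.mpr hx) hx
  simpa [h0] using this

private lemma aux_c2_lower (x : ℝ) (hx : 0 ≤ x) : x^0/1 - x^2/2 ≤ Real.cos x := by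
  have h := nonneg_of_deriv (f := fun y => Real.cos y - (y^0/1 - y^2/2))
    (d := fun y => (y^1/1) - Real.sin y)
    (by norm_num)
    (fun y => by
      have hpoly := ((hasDerivAt_pow 0 y).div_const 1).sub ((hasDerivAt_pow 2 y).div_const 2)
      have hcomb := (Real.hasDerivAt_cos y).sub hpoly
      refine hcomb.congr_deriv ?_
      push_cast; ring)
    (fun y hy => by
      show (0:ℝ) ≤ (y^1/1) - Real.sin y
      have hprev := Real.sin_le hy
      linarith)
    hx
  linarith [h]

private lemma aux_s2_lower (x : ℝ) (hx : 0 ≤ x) : x^1/1 - x^3/6 ≤ Real.sin x := by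
  have h := nonneg_of_deriv (f := fun y => Real.sin y - (y^1/1 - y^3/6))
    (d := fun y => Real.cos y - (y^0/1 - y^2/2))
    (by norm_num)
    (fun y => by
      have hpoly := ((hasDerivAt_pow 1 y).div_const 1).sub ((hasDerivAt_pow 3 y).div_const 6)
      have hcomb := (Real.hasDerivAt_sin y).sub hpoly
      refine hcomb.congr_deriv ?_
      push_cast; ring)
    (fun y hy => by
      show (0:ℝ) ≤ Real.cos y - (y^0/1 - y^2/2)
      have hprev := aux_c2_lower y hy
      linarith)
    hx
  linarith [h]

private lemma aux_c3_upper (x : ℝ) (hx : 0 ≤ x) : Real.cos x ≤ x^0/1 - x^2/2 + x^4/24 := by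
  have h := nonneg_of_deriv (f := fun y => (y^0/1 - y^2/2 + y^4/24) - Real.cos y)
    (d := fun y => Real.sin y - (y^1/1 - y^3/6))
    (by norm_num)
    (fun y => by
      have hpoly := (((hasDerivAt_pow 0 y).div_const 1).sub ((hasDerivAt_pow 2 y).div_const 2)).add ((hasDerivAt_pow 4 y).div_const 24)
      have hcomb := hpoly.sub (Real.hasDerivAt_cos y)
      refine hcomb.congr_deriv ?_
      push_cast; ring)
    (fun y hy => by
      show (0:ℝ) ≤ Real.sin y - (y^1/1 - y^3/6)
      have hprev := aux_s2_lower y hy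
      linarith)
    hx
  linarith [h]

private lemma aux_s3_upper (x : ℝ) (hx : 0 ≤ x) : Real.sin x ≤ x^1/1 - x^3/6 + x^5/120 := by
  have h := nonneg_of_deriv (f := fun y => (y^1/1 - y^3/6 + y^5/120) - Real.sin y)
    (d := fun y => (y^0/1 - y^2/2 + y^4/24) - Real.cos y)
    (by norm_num)
    (fun y => by
      have hpoly := (((hasDerivAt_pow 1 y).div_const 1).sub ((hasDerivAt_pow 3 y).div_const 6)).add ((hasDerivAt_pow 5 y).div_const 120)
      have hcomb := hpoly.sub (Real.hasDerivAt_sin y)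
      refine hcomb.congr_deriv ?_
      push_cast; ring)
    (fun y hy => by
      show (0:ℝ) ≤ (y^0/1 - y^2/2 + y^4/24) - Real.cos y
      have hprev := aux_c3_upper y hy
      linarith)
    hx
  linarith [h]

private lemma aux_c4_lower (x : ℝ) (hx : 0 ≤ x) : x^0/1 - x^2/2 + x^4/24 - x^6/720 ≤ Real.cos x := by
  have h := nonneg_of_deriv (f := fun y => Real.cos y - (y^0/1 - y^2/2 + y^4/24 - y^6/720))
    (d := fun y => (y^1/1 - y^3/6 + y^5/120) - Real.sin y)
    (by norm_num)
    (fun y => by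
      have hpoly := ((((hasDerivAt_pow 0 y).div_const 1).sub ((hasDerivAt_pow 2 y).div_const 2)).add ((hasDerivAt_pow 4 y).div_const 24)).sub ((hasDerivAt_pow 6 y).div_const 720)
      have hcomb := (Real.hasDerivAt_cos y).sub hpoly
      refine hcomb.congr_deriv ?_
      push_cast; ring)
    (fun y hy => by
      show (0:ℝ) ≤ (y^1/1 - y^3/6 + y^5/120) - Real.sin y
      have hprev := aux_s3_upper y hy
      linarith)
    hx
  linarith [h]

private lemma aux_s4_lower (x : ℝ) (hx : 0 ≤ x) : x^1/1 - x^3/6 + x^5/120 - x^7/5040 ≤ Real.sin x := by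
  have h := nonneg_of_deriv (f := fun y => Real.sin y - (y^1/1 - y^3/6 + y^5/120 - y^7/5040))
    (d := fun y => Real.cos y - (y^0/1 - y^2/2 + y^4/24 - y^6/720))
    (by norm_num)
    (fun y => by
      have hpoly := ((((hasDerivAt_pow 1 y).div_const 1).sub ((hasDerivAt_pow 3 y).div_const 6)).add ((hasDerivAt_pow 5 y).div_const 120)).sub ((hasDerivAt_pow 7 y).div_const 5040)
      have hcomb := (Real.hasDerivAt_sin y).sub hpoly
      refine hcomb.congr_deriv ?_
      push_cast; ring)
    (fun y hy => by
      show (0:ℝ) ≤ Real.cos y - (y^0/1 - y^2/2 + y^4/24 - y^6/720)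
      have hprev := aux_c4_lower y hy
      linarith)
    hx
  linarith [h]

private lemma aux_c5_upper (x : ℝ) (hx : 0 ≤ x) : Real.cos x ≤ x^0/1 - x^2/2 + x^4/24 - x^6/720 + x^8/40320 := by
  have h := nonneg_of_deriv (f := fun y => (y^0/1 - y^2/2 + y^4/24 - y^6/720 + y^8/40320) - Real.cos y)
    (d := fun y => Real.sin y - (y^1/1 - y^3/6 + y^5/120 - y^7/5040))
    (by norm_num)
    (fun y => by
      have hpoly := (((((hasDerivAt_pow 0 y).div_const 1).sub ((hasDerivAt_pow 2 y).div_const 2)).add ((hasDerivAt_pow 4 y).div_const 24)).sub ((hasDerivAt_pow 6 y).div_const 720)).add ((hasDerivAt_pow 8 y).div_const 40320)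
      have hcomb := hpoly.sub (Real.hasDerivAt_cos y)
      refine hcomb.congr_deriv ?_
      push_cast; ring)
    (fun y hy => by
      show (0:ℝ) ≤ Real.sin y - (y^1/1 - y^3/6 + y^5/120 - y^7/5040)
      have hprev := aux_s4_lower y hy
      linarith)
    hx
  linarith [h]

private lemma aux_s5_upper (x : ℝ) (hx : 0 ≤ x) : Real.sin x ≤ x^1/1 - x^3/6 + x^5/120 - x^7/5040 + x^9/362880 := by
  have h := nonneg_of_deriv (f := fun y => (y^1/1 - y^3/6 + y^5/120 - y^7/5040 + y^9/362880) - Real.sin y)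
    (d := fun y => (y^0/1 - y^2/2 + y^4/24 - y^6/720 + y^8/40320) - Real.cos y)
    (by norm_num)
    (fun y => by
      have hpoly := (((((hasDerivAt_pow 1 y).div_const 1).sub ((hasDerivAt_pow 3 y).div_const 6)).add ((hasDerivAt_pow 5 y).div_const 120)).sub ((hasDerivAt_pow 7 y).div_const 5040)).add ((hasDerivAt_pow 9 y).div_const 362880)
      have hcomb := hpoly.sub (Real.hasDerivAt_sin y)
      refine hcomb.congr_deriv ?_
      push_cast; ring)
    (fun y hy => by
      show (0:ℝ) ≤ (y^0/1 - y^2/2 + y^4/24 - y^6/720 + y^8/40320) - Real.cos y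
      have hprev := aux_c5_upper y hy
      linarith)
    hx
  linarith [h]

private lemma aux_c6_lower (x : ℝ) (hx : 0 ≤ x) : x^0/1 - x^2/2 + x^4/24 - x^6/720 + x^8/40320 - x^10/3628800 ≤ Real.cos x := by
  have h := nonneg_of_deriv (f := fun y => Real.cos y - (y^0/1 - y^2/2 + y^4/24 - y^6/720 + y^8/40320 - y^10/3628800))
    (d := fun y => (y^1/1 - y^3/6 + y^5/120 - y^7/5040 + y^9/362880) - Real.sin y)
    (by norm_num)
    (fun y => by
      have hpoly := ((((((hasDerivAt_pow 0 y).div_const 1).sub ((hasDerivAt_pow 2 y).div_const 2)).add ((hasDerivAt_pow 4 y).div_const 24)).sub ((hasDerivAt_pow 6 y).div_const 720)).add ((hasDerivAt_pow 8 y).div_const 40320)).sub ((hasDerivAt_pow 10 y).div_const 3628800)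
      have hcomb := (Real.hasDerivAt_cos y).sub hpoly
      refine hcomb.congr_deriv ?_
      push_cast; ring)
    (fun y hy => by
      show (0:ℝ) ≤ (y^1/1 - y^3/6 + y^5/120 - y^7/5040 + y^9/362880) - Real.sin y
      have hprev := aux_s5_upper y hy
      linarith)
    hx
  linarith [h]

private lemma aux_s6_lower (x : ℝ) (hx : 0 ≤ x) : x^1/1 - x^3/6 + x^5/120 - x^7/5040 + x^9/362880 - x^11/39916800 ≤ Real.sin x := by
  have h := nonneg_of_deriv (f := fun y => Real.sin y - (y^1/1 - y^3/6 + y^5/120 - y^7/5040 + y^9/362880 - y^11/39916800))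
    (d := fun y => Real.cos y - (y^0/1 - y^2/2 + y^4/24 - y^6/720 + y^8/40320 - y^10/3628800))
    (by norm_num)
    (fun y => by
      have hpoly := ((((((hasDerivAt_pow 1 y).div_const 1).sub ((hasDerivAt_pow 3 y).div_const 6)).add ((hasDerivAt_pow 5 y).div_const 120)).sub ((hasDerivAt_pow 7 y).div_const 5040)).add ((hasDerivAt_pow 9 y).div_const 362880)).sub ((hasDerivAt_pow 11 y).div_const 39916800)
      have hcomb := (Real.hasDerivAt_sin y).sub hpoly
      refine hcomb.congr_deriv ?_
      push_cast; ring)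
    (fun y hy => by
      show (0:ℝ) ≤ Real.cos y - (y^0/1 - y^2/2 + y^4/24 - y^6/720 + y^8/40320 - y^10/3628800)
      have hprev := aux_c6_lower y hy
      linarith)
    hx
  linarith [h]

private lemma sin_lb_S11 (x : ℝ) (hx : 0 ≤ x) :
    x - x^3/6 + x^5/120 - x^7/5040 + x^9/362880 - x^11/39916800 ≤ Real.sin x := by
  have := aux_s6_lower x hx; linarith
private lemma g_mono {lam a b : ℝ} (h0 : 0 ≤ lam) (h13 : lam ≤ 1/3)
    (ha : 0 ≤ a) (hab : a ≤ b) :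
    a + lam * (2 - Real.sqrt (1 + 4*a^2)) ≤ b + lam * (2 - Real.sqrt (1 + 4*b^2)) := by
  have hb : 0 ≤ b := le_trans ha hab
  have hsa2 : Real.sqrt (1 + 4*a^2) ^ 2 = 1 + 4*a^2 := Real.sq_sqrt (by positivity)
  have hsb2 : Real.sqrt (1 + 4*b^2) ^ 2 = 1 + 4*b^2 := Real.sq_sqrt (by positivity)
  set sa := Real.sqrt (1 + 4*a^2) with hsadef
  set sb := Real.sqrt (1 + 4*b^2) with hsbdef
  have hsa0 : 0 ≤ sa := Real.sqrt_nonneg _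
  have hsb0 : 0 ≤ sb := Real.sqrt_nonneg _
  have hsa1 : 1 ≤ sa := by nlinarith [sq_nonneg a]
  have hsb1 : 1 ≤ sb := by nlinarith [sq_nonneg b]
  have hsa2a : 2*a ≤ sa := by nlinarith
  have hsb2b : 2*b ≤ sb := by nlinarith
  have hdiff : (sb - sa) * (sb + sa) = 4*(b-a)*(b+a) := by nlinarith
  have h2 : lam*(b+a) ≤ (1/3)*(b+a) := mul_le_mul_of_nonneg_right h13 (by linarith)
  have h3 : 0 ≤ (sa + sb) - 4*lam*(b+a) := by linarith
  have h1 : 0 ≤ (b-a) * ((sa + sb) - 4*lam*(b+a)) := mul_nonneg (by linarith) h3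
  have h4 : lam*((sb - sa)*(sb + sa)) = lam*(4*(b-a)*(b+a)) := by rw [hdiff]
  have hkey : lam * (sb - sa) ≤ b - a := by nlinarith [h1, h4, hsa1, hsb1]
  linarith

theorem supporting_points_lower_bounds (lam τ₁ τ₂ τ₃ τ₄ τ₅ : ℝ)
    (hlam : lam = (1/Real.pi) * Real.sin ((3*Real.pi - 2)/12))
    (hτ₁ : τ₁ ∈ Set.Ioo 0 (Real.sqrt 3 / 2))
    (hint : (Real.pi/2) * (∫ τ in (0:ℝ)..τ₁, 1/(2 - Real.sqrt (1 + 4*τ^2))) = 1/3)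
    (h2 : τ₂ = τ₁ + lam * (2 - Real.sqrt (1 + 4*τ₁^2)))
    (h3 : τ₃ = τ₂ + lam * (2 - Real.sqrt (1 + 4*τ₂^2)))
    (h4 : τ₄ = τ₃ + lam * (2 - Real.sqrt (1 + 4*τ₃^2)))
    (h5 : τ₅ = τ₄ + lam * (2 - Real.sqrt (1 + 4*τ₄^2))) :
    τ₂ > 0.3757396 ∧ τ₃ > 0.5140409 ∧ τ₄ > 0.6184976 ∧ τ₅ > 0.6940725 := by
  obtain ⟨ht1pos, ht1lt⟩ := hτ₁
  have hπl := Real.pi_gt_d20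
  have hπu := Real.pi_lt_d20
  have hπ0 := Real.pi_pos
  have hsqrt3 : Real.sqrt 3 ^ 2 = 3 := Real.sq_sqrt (by norm_num)
  have hsqrt3nn := Real.sqrt_nonneg 3
  have ht1sq : 4 * τ₁^2 < 3 := by nlinarith
  -- lam bounds
  have hlampi : lam * Real.pi = Real.sin ((3*Real.pi - 2)/12) := by
    rw [hlam]; field_simp
  have hsin1 := Real.sin_le_one ((3*Real.pi - 2)/12)
  have hsinlb : (0.5800022857:ℝ) ≤ Real.sin ((3*Real.pi - 2)/12) := by
    have hmem1 : (0.6187314967:ℝ) ∈ Set.Icc (-(Real.pi/2)) (Real.pi/2) := by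
      constructor <;> linarith
    have hmem2 : (3*Real.pi - 2)/12 ∈ Set.Icc (-(Real.pi/2)) (Real.pi/2) := by
      constructor <;> linarith
    have hle : (0.6187314967:ℝ) ≤ (3*Real.pi - 2)/12 := by linarith
    have hm := Real.strictMonoOn_sin.monotoneOn hmem1 hmem2 hle
    have hS := sin_lb_S11 0.6187314967 (by norm_num)
    have hval : (0.5800022857:ℝ) ≤ Real.sin 0.6187314967 := by
      refine le_trans ?_ hS; norm_num
    linarith
  have hlam_lb : (0.1846204615:ℝ) ≤ lam := by
    by_contra hcon
    push_neg at hcon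
    have h1 : lam * Real.pi < 0.1846204615 * Real.pi :=
      mul_lt_mul_of_pos_right hcon hπ0
    linarith
  have hlam_nn : (0:ℝ) ≤ lam := by linarith
  have hlam_ub : lam ≤ 1/3 := by
    by_contra hcon
    push_neg at hcon
    have h1 : (1/3:ℝ) * Real.pi < lam * Real.pi :=
      mul_lt_mul_of_pos_right hcon hπ0
    linarith
  -- lower bound for τ₁
  have hL1 : (0.206203095:ℝ) < τ₁ := by
    by_contra hcon
    push_neg at hcon
    have hcont : ContinuousOn (fun τ : ℝ => 1/(2 - Real.sqrt (1 + 4*τ^2)))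
        (Set.Icc (0:ℝ) τ₁) := by
      apply ContinuousOn.div continuousOn_const
      · exact (continuous_const.sub (Real.continuous_sqrt.comp
          (continuous_const.add (continuous_const.mul (continuous_pow 2))))).continuousOn
      · intro t ht
        have h4t : 4*t^2 < 3 := by nlinarith only [ht.1, ht.2, ht1sq]
        have hsq : Real.sqrt (1 + 4*t^2) ^ 2 = 1 + 4*t^2 :=
          Real.sq_sqrt (by positivity)
        have hlt : Real.sqrt (1 + 4*t^2) < 2 := by
          nlinarith only [Real.sqrt_nonneg (1 + 4*t^2), hsq, h4t]
        exact ne_of_gt (by linarith)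
    have hfint : IntervalIntegrable (fun τ : ℝ => 1/(2 - Real.sqrt (1 + 4*τ^2)))
        volume 0 τ₁ := by
      apply ContinuousOn.intervalIntegrable
      rwa [Set.uIcc_of_le (le_of_lt ht1pos)]
    have hqcont : Continuous (fun t : ℝ =>
        1.000000001 + 2*t^2 + 2*t^4 + 4*t^6 + 2*t^8 + 12*t^10) :=
      ((((continuous_const.add (continuous_const.mul (continuous_pow 2))).add
        (continuous_const.mul (continuous_pow 4))).add
        (continuous_const.mul (continuous_pow 6))).add
        (continuous_const.mul (continuous_pow 8))).add
        (continuous_const.mul (continuous_pow 10))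
    have hqint : IntervalIntegrable (fun t : ℝ =>
        1.000000001 + 2*t^2 + 2*t^4 + 4*t^6 + 2*t^8 + 12*t^10) volume 0 τ₁ :=
      hqcont.intervalIntegrable 0 τ₁
    have hpt : ∀ t ∈ Set.Icc (0:ℝ) τ₁, 1/(2 - Real.sqrt (1 + 4*t^2)) ≤
        1.000000001 + 2*t^2 + 2*t^4 + 4*t^6 + 2*t^8 + 12*t^10 := by
      intro t ht
      obtain ⟨ht0, htt⟩ := ht
      have htL : t ≤ 0.206203095 := le_trans htt hcon
      have hsq : Real.sqrt (1 + 4*t^2) ^ 2 = 1 + 4*t^2 := Real.sq_sqrt (by positivity)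
      set s := Real.sqrt (1 + 4*t^2) with hsdef
      have hs0 : 0 ≤ s := Real.sqrt_nonneg _
      have htp : ∀ n : ℕ, t^n ≤ (0.206203095:ℝ)^n :=
        fun n => pow_le_pow_left₀ ht0 htL n
      have hU2 : t^2 ≤ (0.04251972:ℝ) := le_trans (htp 2) (by norm_num)
      have hslt : s < 2 := by nlinarith only [hsq, hU2, hs0]
      have hU4 : t^4 ≤ (0.001807926282:ℝ) := le_trans (htp 4) (by norm_num)
      have hU6 : t^6 ≤ (0.0000768725127467:ℝ) := le_trans (htp 6) (by norm_num)
      have hU8 : t^8 ≤ (0.00000326859743998984:ℝ) := le_trans (htp 8) (by norm_num)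
      have hU10 : t^10 ≤ (0.000000138979836133534672:ℝ) := le_trans (htp 10) (by norm_num)
      have hp2 := pow_nonneg ht0 2
      have hp4 := pow_nonneg ht0 4
      have hp6 := pow_nonneg ht0 6
      have hp8 := pow_nonneg ht0 8
      have hp10 := pow_nonneg ht0 10
      have hp12 := pow_nonneg ht0 12
      have habs : ∀ Q u : ℝ, 1 ≤ Q → 0 ≤ u → u^2*Q^2 ≤ (2*Q-1)^2 → u*Q ≤ 2*Q-1 := by
        intro Q u h1 hu h3
        nlinarith only [h1, hu, h3, mul_nonneg hu (le_trans zero_le_one h1)]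
      have hq1 : 1 ≤ 1.000000001 + 2*t^2 + 2*t^4 + 4*t^6 + 2*t^8 + 12*t^10 := by
        linarith only [hp2, hp4, hp6, hp8, hp10]
      have hA : (0:ℝ) ≤ 0.000000002000000003 + 0.000000003999999996*t^2
          - 0.000000004*t^4 + 0.000000008*t^6 - 0.00000002*t^8 + 0.000000056*t^10 := by
        linarith only [hU4, hU8, hp2, hp6, hp10]
      have hB : (0:ℝ) ≤ 23.999999904 - 96*t^2 + 44*t^4 - 256*t^6 + 240*t^8 - 576*t^10 := by
        linarith only [hU2, hU6, hU10, hp4, hp8]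
      have hB12 := mul_nonneg hp12 hB
      have hexp : (2*(1.000000001 + 2*t^2 + 2*t^4 + 4*t^6 + 2*t^8 + 12*t^10) - 1)^2
          - (1 + 4*t^2)*(1.000000001 + 2*t^2 + 2*t^4 + 4*t^6 + 2*t^8 + 12*t^10)^2 =
          (0.000000002000000003 + 0.000000003999999996*t^2 - 0.000000004*t^4
            + 0.000000008*t^6 - 0.00000002*t^8 + 0.000000056*t^10)
          + t^12 * (23.999999904 - 96*t^2 + 44*t^4 - 256*t^6 + 240*t^8 - 576*t^10) := by
        ring
      have hG : (1 + 4*t^2) * (1.000000001 + 2*t^2 + 2*t^4 + 4*t^6 + 2*t^8 + 12*t^10)^2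
          ≤ (2*(1.000000001 + 2*t^2 + 2*t^4 + 4*t^6 + 2*t^8 + 12*t^10) - 1)^2 := by
        linarith only [hA, hB12, hexp]
      have hG' : s^2 * (1.000000001 + 2*t^2 + 2*t^4 + 4*t^6 + 2*t^8 + 12*t^10)^2
          ≤ (2*(1.000000001 + 2*t^2 + 2*t^4 + 4*t^6 + 2*t^8 + 12*t^10) - 1)^2 := by
        rw [hsq]; exact hG
      have hsq2 := habs _ s hq1 hs0 hG'
      rw [div_le_iff₀ (by linarith only [hslt] : (0:ℝ) < 2 - s)]
      linarith only [hsq2]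
    have hmono := intervalIntegral.integral_mono_on (le_of_lt ht1pos) hfint hqint hpt
    have hQder : ∀ u ∈ Set.uIcc (0:ℝ) τ₁,
        HasDerivAt (fun y : ℝ => 1.000000001*y^1 + 2/3*y^3 + 2/5*y^5 + 4/7*y^7
          + 2/9*y^9 + 12/11*y^11)
        (1.000000001 + 2*u^2 + 2*u^4 + 4*u^6 + 2*u^8 + 12*u^10) u := by
      intro u _
      have h := ((((((hasDerivAt_pow 1 u).const_mul (1.000000001:ℝ)).add
        ((hasDerivAt_pow 3 u).const_mul (2/3:ℝ))).add
        ((hasDerivAt_pow 5 u).const_mul (2/5:ℝ))).add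
        ((hasDerivAt_pow 7 u).const_mul (4/7:ℝ))).add
        ((hasDerivAt_pow 9 u).const_mul (2/9:ℝ))).add
        ((hasDerivAt_pow 11 u).const_mul (12/11:ℝ))
      refine h.congr_deriv ?_
      push_cast; ring
    have hqval := intervalIntegral.integral_eq_sub_of_hasDerivAt hQder hqint
    rw [hqval] at hmono
    have hτp : ∀ n : ℕ, τ₁^n ≤ (0.206203095:ℝ)^n :=
      fun n => pow_le_pow_left₀ (le_of_lt ht1pos) hcon n
    have hQle : (1.000000001*τ₁^1 + 2/3*τ₁^3 + 2/5*τ₁^5 + 4/7*τ₁^7 + 2/9*τ₁^9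
          + 12/11*τ₁^11) - (1.000000001*(0:ℝ)^1 + 2/3*(0:ℝ)^3 + 2/5*(0:ℝ)^5
          + 4/7*(0:ℝ)^7 + 2/9*(0:ℝ)^9 + 12/11*(0:ℝ)^11) ≤ (0.21220658558:ℝ) := by
      have h1 := hτp 1
      have h3 := hτp 3
      have h5 := hτp 5
      have h7 := hτp 7
      have h9 := hτp 9
      have h11 := hτp 11
      have hval : 1.000000001*(0.206203095:ℝ)^1 + 2/3*(0.206203095:ℝ)^3
          + 2/5*(0.206203095:ℝ)^5 + 4/7*(0.206203095:ℝ)^7 + 2/9*(0.206203095:ℝ)^9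
          + 12/11*(0.206203095:ℝ)^11 ≤ (0.21220658558:ℝ) := by norm_num
      linarith only [h1, h3, h5, h7, h9, h11, hval]
    have hIle : (∫ τ in (0:ℝ)..τ₁, 1/(2 - Real.sqrt (1 + 4*τ^2))) ≤ (0.21220658558:ℝ) :=
      le_trans hmono hQle
    have hfin : (Real.pi/2) * (∫ τ in (0:ℝ)..τ₁, 1/(2 - Real.sqrt (1 + 4*τ^2))) < 1/3 := by
      have hh : (Real.pi/2) * (∫ τ in (0:ℝ)..τ₁, 1/(2 - Real.sqrt (1 + 4*τ^2))) ≤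
          (Real.pi/2) * (0.21220658558:ℝ) :=
        mul_le_mul_of_nonneg_left hIle (by positivity)
      linarith only [hh, hπu, hπ0]
    rw [hint] at hfin
    exact absurd hfin (by norm_num)
  -- chain
  have hsb : ∀ L c : ℝ, 0 ≤ L → 0 ≤ c → 1 + 4*L^2 ≤ c^2 → Real.sqrt (1 + 4*L^2) ≤ c := by
    intro L c hL hc hLc
    calc Real.sqrt (1 + 4*L^2) ≤ Real.sqrt (c^2) := Real.sqrt_le_sqrt hLc
    _ = c := Real.sqrt_sq hc
  have step : ∀ L c t : ℝ, 0 ≤ L → L ≤ t → 0 ≤ c → c ≤ 2 → 1 + 4*L^2 ≤ c^2 →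
      L + 0.1846204615*(2 - c) ≤ t + lam * (2 - Real.sqrt (1 + 4*t^2)) := by
    intro L c t hL hLt hc hc2 hLc
    have hmon := g_mono hlam_nn hlam_ub hL hLt
    have hsqb := hsb L c hL hc hLc
    have hmul : (0.1846204615:ℝ)*(2 - c) ≤ lam * (2 - Real.sqrt (1 + 4*L^2)) :=
      mul_le_mul hlam_lb (by linarith) (by linarith) hlam_nn
    linarith
  have ht2 : (0.3757397255:ℝ) ≤ τ₂ := by
    rw [h2]
    refine le_trans (by norm_num) (step 0.206203095 1.08170183764 τ₁ (by norm_num)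
      (le_of_lt hL1) (by norm_num) (by norm_num) (by norm_num))
  have ht3 : (0.514041086:ℝ) ≤ τ₃ := by
    rw [h3]
    refine le_trans (by norm_num) (step 0.3757397255 1.25088823053 τ₂ (by norm_num)
      ht2 (by norm_num) (by norm_num) (by norm_num))
  have ht4 : (0.6184978426:ℝ) ≤ τ₄ := by
    rw [h4]
    refine le_trans (by norm_num) (step 0.514041086 1.43420812729 τ₃ (by norm_num)
      ht3 (by norm_num) (by norm_num) (by norm_num))
  have ht5 : (0.6940727564:ℝ) ≤ τ₅ := by
    rw [h5]
    refine le_trans (by norm_num) (step 0.6184978426 1.59064714039 τ₄ (by norm_num)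
      ht4 (by norm_num) (by norm_num) (by norm_num))
  refine ⟨by norm_num at ht2 ⊢; linarith, by norm_num at ht3 ⊢; linarith,
    by norm_num at ht4 ⊢; linarith, by norm_num at ht5 ⊢; linarith⟩
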